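/- Consider the objective F(x) = (μ/2)(x₁ − b)² + (H/2)(x₂ − b)² + (L/2)((x₃ − c)² + [x₃ − c]₊²) on ℝ³ with stochastic gradient ∇f(x; z) = ∇F(x) + (0, 0, z)ᵀ, where P[z = σ] = P[z = −σ] = 1/2, and with c ≥ 0. Let K ≥ 2, M, R ≥ 1, and let x̂ (the averaged iterate after the final round) be the output of local SGD with M machines, K local steps per round, R rounds, fixed stepsize η ≤ 1/(2L), initialized at 0. If c ≥ ησ/48 or η ≥ 2/(LRK), then E[ (L/2)((x̂₃ − c)² + [x̂₃ − c]₊²) ] ≥ Lη²σ²/4608. -/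

import Mathlib

open MeasureTheory ProbabilityTheory
open scoped BigOperators

/-- The two-point noise distribution placing mass `1/2` on each of `σ` and `-σ`. -/
noncomputable def twoPoint (σ : ℝ) : Measure ℝ :=
  (2⁻¹ : ENNReal) • Measure.dirac σ + (2⁻¹ : ENNReal) • Measure.dirac (-σ)

-- Auxiliary lemmas
lemma integrable_dirac_any {α : Type*} [MeasurableSpace α] [MeasurableSingletonClass α]
    (f : α → ℝ) (a : α) : Integrable f (Measure.dirac a) := by
  have hae : f =ᵐ[Measure.dirac a] (fun _ => f a) := by
    rw [Filter.EventuallyEq, ae_iff]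
    refine measure_mono_null (t := ({a}ᶜ : Set α)) (fun x hx hxa => ?_) ?_
    · simp only [Set.mem_singleton_iff] at hxa
      subst hxa
      exact hx rfl
    · rw [Measure.dirac_apply' _ (measurableSet_singleton a).compl]
      simp
  exact (integrable_congr hae).mpr (integrable_const _)

lemma twoPoint_integral (σ : ℝ) (f : ℝ → ℝ) :
    ∫ w, f w ∂(twoPoint σ) = (f σ + f (-σ))/2 := by
  rw [twoPoint, integral_add_measure
      (((integrable_dirac_any f σ)).smul_measure (by norm_num))
      (((integrable_dirac_any f (-σ))).smul_measure (by norm_num)),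
    integral_smul_measure, integral_smul_measure, integral_dirac, integral_dirac]
  norm_num
  ring

instance twoPoint_prob (σ : ℝ) : IsProbabilityMeasure (twoPoint σ) := by
  constructor
  simp [twoPoint, ENNReal.inv_two_add_inv_two]

lemma twoPoint_comp_integral {Ω : Type*} [MeasurableSpace Ω] {P : Measure Ω}
    {X : Ω → ℝ} (hX : Measurable X) {σ : ℝ} (hlaw : Measure.map X P = twoPoint σ)
    (f : ℝ → ℝ) (hf : Measurable f) :
    ∫ ω, f (X ω) ∂P = (f σ + f (-σ))/2 := by
  rw [← twoPoint_integral σ f, ← hlaw,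
    integral_map hX.aemeasurable hf.aestronglyMeasurable]




set_option maxHeartbeats 1000000 in
lemma det_rec (β s c : ℝ) (K R : ℕ) (hβ0 : 0 < β) (hβ : β ≤ 1/2) (hs : 0 < s) (hc0 : 0 ≤ c)
    (hK : 2 ≤ K) (hR : 1 ≤ R) (b q : ℕ → ℝ)
    (hb0 : b 0 = c)
    (hrec : ∀ t, b (t+1) = (1 - β) * b t + β * q t)
    (hq0 : ∀ t, 0 ≤ q t)
    (hq : ∀ t, t % K ≠ 0 → (s - b t)/2 ≤ q t)
    (hcase : s/48 ≤ c ∨ 2 ≤ β * (R * K)) :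
    s/48 ≤ b (K*R) := by
  have hbnn : ∀ t, 0 ≤ b t := by
    intro t
    induction t with
    | zero => simpa [hb0]
    | succ t ih =>
      rw [hrec]
      have := hq0 t
      nlinarith
  have hbad : ∀ t, (1-β) * b t ≤ b (t+1) := by
    intro t
    rw [hrec]
    have := hq0 t
    nlinarith
  have hgood : ∀ t, t % K ≠ 0 → b t + (β/2) * (s - 3 * b t) ≤ b (t+1) := by
    intro t ht
    rw [hrec]
    have := hq t ht
    nlinarith
  have hmod1 : ∀ t, t % K = 0 → (t+1) % K = 1 := by
    intro t ht
    have h1 : K * (t / K) + t % K = t := Nat.div_add_mod t K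
    rw [ht] at h1
    have h2 : t + 1 = K * (t / K) + 1 := by omega
    rw [h2, Nat.mul_add_mod]
    exact Nat.mod_eq_of_lt (by omega)
  have hmod2 : ∀ t, t % K ≠ 0 → (t+1) % K ≠ 1 := by
    intro t ht h1
    have h2 : K * ((t+1) / K) + (t+1) % K = t + 1 := Nat.div_add_mod (t+1) K
    rw [h1] at h2
    have h3 : t = K * ((t+1)/K) := by omega
    exact ht (by rw [h3, Nat.mul_mod_right])
  -- maintenance
  have maint : ∀ t₀, s/48 ≤ b t₀ → ∀ n,
      ((1-β)*(s/48) ≤ b (t₀+n)) ∧ ((t₀+n) % K ≠ 1 → s/48 ≤ b (t₀+n)) := by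
    intro t₀ h0 n
    induction n with
    | zero =>
      have hbs : (0:ℝ) ≤ β*s := mul_nonneg hβ0.le hs.le
      constructor
      · simpa using le_trans (by nlinarith) h0
      · simpa using fun _ => h0
    | succ n ih =>
      obtain ⟨ih1, ih2⟩ := ih
      set t := t₀ + n with htdef
      have hstep : t₀ + (n+1) = t + 1 := by omega
      rw [hstep]
      by_cases ht0 : t % K = 0
      · -- bad step; b t ≥ s/48
        have hb : s/48 ≤ b t := ih2 (by rw [ht0]; omega)
        have h1 : (1-β)*(s/48) ≤ b (t+1) :=
          le_trans (by nlinarith) (hbad t)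
        refine ⟨h1, fun hne => absurd (hmod1 t ht0) hne⟩
      · -- good step
        have hne1 : (t+1) % K ≠ 1 := hmod2 t ht0
        have hnext : s/48 ≤ b (t+1) := by
          by_cases htm : t % K = 1
          · have hb : (1-β)*(s/48) ≤ b t := ih1
            by_cases hb3 : b t ≤ s/3
            · have := hgood t ht0
              nlinarith [mul_nonneg (by linarith : (0:ℝ) ≤ 1 - 3*β/2)
                  (by linarith : (0:ℝ) ≤ b t - (1-β)*(s/48)),
                mul_nonneg hβ0.le hs.le,
                mul_nonneg (mul_nonneg hβ0.le hβ0.le) hs.le]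
            · have := hbad t
              nlinarith
          · have hb : s/48 ≤ b t := ih2 htm
            by_cases hb3 : b t ≤ s/3
            · have := hgood t ht0
              nlinarith
            · have := hbad t
              nlinarith
        exact ⟨by nlinarith [mul_nonneg hβ0.le hs.le], fun _ => hnext⟩
  -- existence of a time where b ≥ s/48
  have hex : ∃ t₀, t₀ ≤ K*R ∧ s/48 ≤ b t₀ := by
    rcases hcase with hc1 | hc2
    · exact ⟨0, Nat.zero_le _, by rw [hb0]; exact hc1⟩
    by_contra hall
    push_neg at hall
    have hsmall : ∀ t, t ≤ K*R → b t < s/48 := fun t ht => hall t ht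
    -- growth within a round
    have hroundstep : ∀ r, r + 1 ≤ R →
        b (K*r) - β*(s/48) + ((K:ℝ)-1)*(β*s/3) ≤ b (K*(r+1)) := by
      intro r hr
      have hKrK : K*r + K ≤ K*R := by
        have h5 : K*(r+1) = K*r + K := by ring
        have := Nat.mul_le_mul_left K hr
        omega
      have hinner : ∀ j, j + 1 ≤ K →
          b (K*r) - β*(s/48) + (j:ℝ)*(β*s/3) ≤ b (K*r + (j+1)) := by
        intro j
        induction j with
        | zero =>
          intro _
          have hsm : b (K*r) < s/48 := hsmall _ (by omega)
          have := hbad (K*r)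
          push_cast
          nlinarith
        | succ j ih =>
          intro hj
          have ihj := ih (by omega)
          set t := K*r + (j+1) with htd
          have htm : t % K ≠ 0 := by
            have : t % K = (j+1) % K := by simp [htd, Nat.mul_add_mod]
            rw [this, Nat.mod_eq_of_lt (by omega)]
            omega
          have htle : t ≤ K*R := by omega
          have hsm : b t < s/48 := hsmall t htle
          have hg := hgood t htm
          have hstep2 : K*r + (j+1+1) = t + 1 := by omega
          rw [hstep2]
          push_cast
          push_cast at ihj
          nlinarith
      have := hinner (K-1) (by omega)
      have heq : K*r + (K-1+1) = K*(r+1) := by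
        have h5 : K*(r+1) = K*r + K := by ring
        omega
      rw [heq] at this
      rw [Nat.cast_sub (by omega : 1 ≤ K)] at this
      simpa using this
    -- accumulate over rounds
    have hacc : ∀ r, r ≤ R → (r:ℝ)*(β*s*K/7) ≤ b (K*r) := by
      intro r
      induction r with
      | zero => intro _; simpa [hb0] using hc0
      | succ r ih =>
        intro hr
        have h1 := ih (by omega)
        have h2 := hroundstep r hr
        have hK7 : β*(s/48) ≤ ((K:ℝ)-1)*(β*s/3) - (β*s*K/7) - 0 := by
          have hKc : (2:ℝ) ≤ (K:ℝ) := by exact_mod_cast hK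
          nlinarith [mul_nonneg hβ0.le hs.le,
            mul_le_mul_of_nonneg_left hKc (mul_nonneg hβ0.le hs.le)]
        push_cast
        nlinarith
    have hfin := hacc R le_rfl
    have hlast : b (K*R) < s/48 := hsmall _ le_rfl
    have hRK : (2:ℝ) ≤ β * ((R:ℝ)*(K:ℝ)) := hc2
    have hring : (R:ℝ)*(β*s*(K:ℝ)/7) = (β*((R:ℝ)*(K:ℝ)))*s/7 := by ring
    nlinarith [mul_le_mul_of_nonneg_right hRK hs.le]
  obtain ⟨t₀, ht₀, hbt₀⟩ := hex
  have := (maint t₀ hbt₀ (K*R - t₀)).2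
  have heq : t₀ + (K*R - t₀) = K*R := by omega
  rw [heq] at this
  exact this (by rw [Nat.mul_mod_right]; omega)

/-- The stochastic gradient `∇f(x; z) = ∇F(x) + (0,0,z)ᵀ` of the hard instance
`F(x) = (μ/2)(x₁−b)² + (H/2)(x₂−b)² + (L/2)((x₃−c)² + [x₃−c]₊²)`. -/
noncomputable def hardGrad (μ H L b c : ℝ) (x : Fin 3 → ℝ) (zv : ℝ) : Fin 3 → ℝ :=
  ![μ * (x 0 - b), H * (x 1 - b), L * (x 2 - c) + L * max (x 2 - c) 0 + zv]

set_option maxHeartbeats 1600000 in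
/-- For the hard instance above with `c ≥ 0`, `K ≥ 2`, `M, R ≥ 1` and fixed
stepsize `0 < η ≤ 1/(2L)`, if `c ≥ ησ/48` or `η ≥ 2/(LRK)`, then the output `x̂` of local SGD
(the averaged iterate after the final round, initialized at `0`) satisfies
`E[(L/2)((x̂₃ − c)² + [x̂₃ − c]₊²)] ≥ Lη²σ²/4608`. -/
theorem local_sgd_third_coordinate_lower_bound
    (μ H L b c σ η : ℝ)
    (hL : 0 < L) (hη : 0 < η) (hσ : 0 < σ) (hc : 0 ≤ c) (hηL : η ≤ 1 / (2 * L))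
    (K M R : ℕ) (hK : 2 ≤ K) (hM : 1 ≤ M) (hR : 1 ≤ R)
    (hcase : η * σ / 48 ≤ c ∨ 2 / (L * R * K) ≤ η)
    (Ω : Type*) [MeasurableSpace Ω] (P : Measure Ω) [IsProbabilityMeasure P]
    (z : ℕ → Fin M → Ω → ℝ)
    (hzmeas : ∀ t m, Measurable (z t m))
    (hzlaw : ∀ t m, Measure.map (z t m) P = twoPoint σ)
    (hziid : iIndepFun (fun p : ℕ × Fin M => z p.1 p.2) P)
    (x : ℕ → Fin M → Ω → (Fin 3 → ℝ))
    (hx0 : ∀ m ω, x 0 m ω = 0)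
    (hxup : ∀ t m ω, x (t + 1) m ω =
      if (t + 1) % K = 0 then
        (M : ℝ)⁻¹ • ∑ m' : Fin M,
          (x t m' ω - η • hardGrad μ H L b c (x t m' ω) (z t m' ω))
      else x t m ω - η • hardGrad μ H L b c (x t m ω) (z t m ω)) :
    L * η ^ 2 * σ ^ 2 / 4608
      ≤ ∫ ω, L / 2 *
          ((((M : ℝ)⁻¹ • ∑ m : Fin M, x (K * R) m ω) 2 - c) ^ 2 +
            max (((M : ℝ)⁻¹ • ∑ m : Fin M, x (K * R) m ω) 2 - c) 0 ^ 2) ∂P := by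
  have hMR : (0:ℝ) < M := by exact_mod_cast hM
  have hMne : (M:ℝ) ≠ 0 := ne_of_gt hMR
  -- the third coordinate process
  set u : ℕ → Fin M → Ω → ℝ := fun t m ω => x t m ω 2 with hu_def
  set g : ℝ → ℝ := fun v => v - η * (L * (v - c) + L * max (v - c) 0) with hg_def
  have hgcont : Continuous g := by
    apply Continuous.sub continuous_id
    apply Continuous.mul continuous_const
    exact ((continuous_const.mul (continuous_id.sub continuous_const)).add
      (continuous_const.mul ((continuous_id.sub continuous_const).max continuous_const)))
  have hgmeas : Measurable g := hgcont.measurable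
  have hu0 : ∀ m ω, u 0 m ω = 0 := by intro m ω; simp [hu_def, hx0]
  have hurec : ∀ t m ω, u (t+1) m ω =
      if (t+1) % K = 0 then (M:ℝ)⁻¹ * ∑ m' : Fin M, (g (u t m' ω) - η * z t m' ω)
      else g (u t m ω) - η * z t m ω := by
    intro t m ω
    have h := congrFun (hxup t m ω) 2
    by_cases hco : (t+1) % K = 0
    · simp only [hco, if_pos] at h ⊢
      show x (t+1) m ω 2 = _
      rw [h]
      rw [Pi.smul_apply, Finset.sum_apply, smul_eq_mul]
      congr 1
      refine Finset.sum_congr rfl (fun m' _ => ?_)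
      show x t m' ω 2 - η * (hardGrad μ H L b c (x t m' ω) (z t m' ω) 2) = _
      show x t m' ω 2 - η * (L * (x t m' ω 2 - c) + L * max (x t m' ω 2 - c) 0
        + z t m' ω) = _
      simp only [hu_def, hg_def]
      ring
    · simp only [hco, if_neg, if_false] at h ⊢
      show x (t+1) m ω 2 = _
      rw [h]
      show x t m ω 2 - η * (L * (x t m ω 2 - c) + L * max (x t m ω 2 - c) 0
        + z t m ω) = _
      simp only [hu_def, hg_def]
      ring
  -- factorization through the noise variables
  set S : ℕ → Finset (ℕ × Fin M) := fun t => Finset.range t ×ˢ Finset.univ with hS_def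
  have hfact : ∀ t (m : Fin M), ∃ G : ({p : ℕ × Fin M // p ∈ S t} → ℝ) → ℝ,
      Measurable G ∧ ∀ ω, u t m ω = G (fun i => z i.1.1 i.1.2 ω) := by
    intro t
    induction t with
    | zero =>
      intro m
      exact ⟨fun _ => 0, measurable_const, fun ω => hu0 m ω⟩
    | succ t ih =>
      choose G hGmeas hGeq using ih
      have hsub : S t ⊆ S (t+1) := by
        apply Finset.product_subset_product _ subset_rfl
        intro a ha
        simp only [Finset.mem_range] at ha ⊢
        omega
      have hmem : ∀ m' : Fin M, (t, m') ∈ S (t+1) := by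
        intro m'
        simp [hS_def]
      set res : ((S (t+1) : Finset (ℕ × Fin M)) → ℝ) → ({p : ℕ × Fin M // p ∈ S t} → ℝ) :=
        fun v i => v ⟨i.1, hsub i.2⟩ with hres_def
      have hresmeas : Measurable res :=
        measurable_pi_lambda _ (fun i => measurable_pi_apply _)
      have hresval : ∀ ω, res (fun i => z i.1.1 i.1.2 ω) = (fun i => z i.1.1 i.1.2 ω) :=
        fun ω => rfl
      intro m
      by_cases hco : (t+1) % K = 0
      · refine ⟨fun v => (M:ℝ)⁻¹ * ∑ m' : Fin M,
          (g (G m' (res v)) - η * v ⟨(t, m'), hmem m'⟩), ?_, ?_⟩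
        · apply Measurable.const_mul
          apply Finset.measurable_sum
          intro m' _
          exact (hgmeas.comp ((hGmeas m').comp hresmeas)).sub
            (by fun_prop)
        · intro ω
          rw [hurec t m ω, if_pos hco]
          congr 1
          refine Finset.sum_congr rfl (fun m' _ => ?_)
          rw [hGeq m' ω]
      · refine ⟨fun v => g (G m (res v)) - η * v ⟨(t, m), hmem m⟩, ?_, ?_⟩
        · exact (hgmeas.comp ((hGmeas m).comp hresmeas)).sub
            (by fun_prop)
        · intro ω
          rw [hurec t m ω, if_neg hco, hGeq m ω]
  have humeas : ∀ t m, Measurable (u t m) := by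
    intro t m
    obtain ⟨G, hG, hEq⟩ := hfact t m
    have : u t m = fun ω => G (fun i => z i.1.1 i.1.2 ω) := funext hEq
    rw [this]
    exact hG.comp (measurable_pi_lambda _ (fun i => hzmeas _ _))
  have hIndep : ∀ t m, IndepFun (u t m) (z t m) P := by
    intro t m
    obtain ⟨G, hG, hEq⟩ := hfact t m
    have hdisj : Disjoint (S t) ({(t, m)} : Finset (ℕ × Fin M)) := by
      rw [Finset.disjoint_left]
      intro p hp hp'
      simp only [Finset.mem_singleton] at hp'
      subst hp'
      simp [hS_def] at hp
    have h := hziid.indepFun_finset (S t) {(t, m)} hdisj (fun p => hzmeas p.1 p.2)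
    have h2 := h.comp hG (measurable_pi_apply
      (⟨(t, m), Finset.mem_singleton_self _⟩ : {p : ℕ × Fin M // p ∈ ({(t,m)} : Finset (ℕ × Fin M))}))
    have hl : (G ∘ fun a (i : (S t : Finset (ℕ × Fin M))) => z i.1.1 i.1.2 a) = u t m := by
      funext ω
      exact (hEq ω).symm
    have hr : ((fun v : {p : ℕ × Fin M // p ∈ ({(t,m)} : Finset (ℕ × Fin M))} → ℝ =>
        v ⟨(t, m), Finset.mem_singleton_self _⟩) ∘
        (fun a (i : {p : ℕ × Fin M // p ∈ ({(t,m)} : Finset (ℕ × Fin M))}) => z i.1.1 i.1.2 a)) = z t m := rfl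
    rwa [hl, hr] at h2
  -- basic constants
  have hβ0 : 0 < η * L := mul_pos hη hL
  have hβhalf : η * L ≤ 1/2 := by
    have h1 := mul_le_mul_of_nonneg_right hηL hL.le
    have h2 : 1 / (2*L) * L = 1/2 := by
      field_simp
    linarith
  -- a.e. noise values
  have hzae : ∀ᵐ ω ∂P, ∀ p : ℕ × Fin M, z p.1 p.2 ω = σ ∨ z p.1 p.2 ω = -σ := by
    rw [ae_all_iff]
    intro p
    have hmsb : MeasurableSet ({σ, -σ} : Set ℝ) :=
      ((measurableSet_singleton (-σ)).insert σ)
    have h0 : P ((z p.1 p.2) ⁻¹' ({σ, -σ} : Set ℝ)ᶜ) = 0 := by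
      rw [← Measure.map_apply (hzmeas p.1 p.2) hmsb.compl, hzlaw]
      have h1 : Measure.dirac σ (({σ, -σ} : Set ℝ)ᶜ) = 0 := by
        rw [Measure.dirac_apply' _ hmsb.compl]
        simp
      have h2 : Measure.dirac (-σ) (({σ, -σ} : Set ℝ)ᶜ) = 0 := by
        rw [Measure.dirac_apply' _ hmsb.compl]
        simp
      simp [twoPoint, h1, h2]
    rw [ae_iff]
    refine measure_mono_null (fun ω hω => ?_) h0
    simp only [Set.mem_setOf_eq, not_or] at hω
    simp only [Set.mem_preimage, Set.mem_compl_iff, Set.mem_insert_iff,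
      Set.mem_singleton_iff, not_or]
    exact hω
  -- contraction of g towards c
  have hcontract : ∀ v, |g v - c| ≤ |v - c| := by
    intro v
    rcases le_total v c with hvc | hvc
    · have hmax : max (v - c) 0 = 0 := max_eq_right (by linarith)
      have hgv : g v - c = (1 - η*L) * (v - c) := by
        simp only [hg_def, hmax]
        ring
      rw [hgv, abs_mul]
      have h1 : |1 - η*L| ≤ 1 := by
        rw [abs_le]
        constructor <;> nlinarith
      nlinarith [abs_nonneg (v - c)]
    · have hmax : max (v - c) 0 = v - c := max_eq_left (by linarith)
      have hgv : g v - c = (1 - 2*(η*L)) * (v - c) := by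
        simp only [hg_def, hmax]
        ring
      rw [hgv, abs_mul]
      have h1 : |1 - 2*(η*L)| ≤ 1 := by
        rw [abs_le]
        constructor <;> nlinarith
      nlinarith [abs_nonneg (v - c)]
  -- uniform a.e. bounds on the iterates
  set B : ℕ → ℝ := fun t => c + t*(η*σ) with hB_def
  have hubd : ∀ᵐ ω ∂P, ∀ t m, |u t m ω - c| ≤ B t := by
    filter_upwards [hzae] with ω hω
    intro t
    induction t with
    | zero =>
      intro m
      rw [hu0]
      simp [hB_def, abs_of_nonpos, hc, abs_of_nonneg]
    | succ t ih =>
      intro m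
      have hzb : ∀ m', |z t m' ω| ≤ σ := by
        intro m'
        rcases hω (t, m') with h' | h' <;> rw [h'] <;>
          simp [abs_of_pos hσ, abs_of_neg, neg_neg, hσ.le]
      have hterm : ∀ m', |g (u t m' ω) - η * z t m' ω - c| ≤ B t + η*σ := by
        intro m'
        have h1 : |g (u t m' ω) - c| ≤ B t := le_trans (hcontract _) (ih m')
        have h2 : |η * z t m' ω| ≤ η * σ := by
          rw [abs_mul, abs_of_pos hη]
          exact mul_le_mul_of_nonneg_left (hzb m') hη.le
        calc |g (u t m' ω) - η * z t m' ω - c|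
            = |(g (u t m' ω) - c) - η * z t m' ω| := by ring_nf
          _ ≤ |g (u t m' ω) - c| + |η * z t m' ω| := abs_sub _ _
          _ ≤ B t + η*σ := add_le_add h1 h2
      have hBstep : B t + η*σ = B (t+1) := by
        simp only [hB_def]
        push_cast
        ring
      rw [hurec]
      by_cases hco : (t+1) % K = 0
      · rw [if_pos hco]
        have hsum : (M:ℝ)⁻¹ * (∑ m', (g (u t m' ω) - η * z t m' ω)) - c
            = (M:ℝ)⁻¹ * (∑ m' : Fin M, (g (u t m' ω) - η * z t m' ω - c)) := by
          have h6 : ∑ m' : Fin M, (g (u t m' ω) - η * z t m' ω - c)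
              = (∑ m' : Fin M, (g (u t m' ω) - η * z t m' ω)) - ∑ _m' : Fin M, c :=
            Finset.sum_sub_distrib _ _
          have h7 : ∑ _m' : Fin M, c = (M:ℝ) * c := by
            rw [Finset.sum_const, Finset.card_univ, Fintype.card_fin, nsmul_eq_mul]
          rw [h6, h7]
          field_simp
        rw [hsum, abs_mul, abs_inv, Nat.abs_cast]
        have hs1 : |∑ m' : Fin M, (g (u t m' ω) - η * z t m' ω - c)|
            ≤ ∑ m' : Fin M, |g (u t m' ω) - η * z t m' ω - c| :=
          Finset.abs_sum_le_sum_abs _ _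
        have hs2 : ∑ m' : Fin M, |g (u t m' ω) - η * z t m' ω - c| ≤ M * (B t + η*σ) := by
          calc ∑ m' : Fin M, |g (u t m' ω) - η * z t m' ω - c|
              ≤ ∑ _m' : Fin M, (B t + η*σ) := Finset.sum_le_sum (fun m' _ => hterm m')
            _ = M * (B t + η*σ) := by
                rw [Finset.sum_const, Finset.card_univ, Fintype.card_fin, nsmul_eq_mul]
        have hBnn : 0 ≤ B t + η*σ := le_trans (abs_nonneg _) (hterm m)
        calc (M:ℝ)⁻¹ * |∑ m' : Fin M, (g (u t m' ω) - η * z t m' ω - c)|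
            ≤ (M:ℝ)⁻¹ * (M * (B t + η*σ)) := by
              apply mul_le_mul_of_nonneg_left (le_trans hs1 hs2) (inv_nonneg.mpr hMR.le)
          _ = B t + η*σ := by field_simp
          _ = B (t+1) := hBstep
      · rw [if_neg hco]
        rw [← hBstep]
        exact hterm m
  -- integrability helper
  have hintb : ∀ (f : Ω → ℝ) (C : ℝ), Measurable f → (∀ᵐ ω ∂P, |f ω| ≤ C) →
      Integrable f P := by
    intro f C hm hb
    exact ⟨hm.aestronglyMeasurable,
      HasFiniteIntegral.of_bounded (C := C) (by simpa [Real.norm_eq_abs] using hb)⟩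
  have hint_uc : ∀ t m, Integrable (fun ω => u t m ω - c) P := fun t m =>
    hintb _ (B t) ((humeas t m).sub measurable_const)
      (by filter_upwards [hubd] with ω h using h t m)
  have hint_u : ∀ t m, Integrable (u t m) P := by
    intro t m
    have heq : u t m = fun ω => (u t m ω - c) + c := funext fun ω => by ring
    rw [heq]
    exact (hint_uc t m).add (integrable_const c)
  have hint_gu : ∀ t m, Integrable (fun ω => g (u t m ω)) P := by
    intro t m
    refine hintb _ (B t + c) (hgmeas.comp (humeas t m)) ?_
    filter_upwards [hubd] with ω h
    have h1 : |g (u t m ω) - c| ≤ B t := le_trans (hcontract _) (h t m)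
    have h2 : |g (u t m ω)| ≤ |g (u t m ω) - c| + |c| := by
      have := abs_add_le (g (u t m ω) - c) c
      simpa using this
    rw [abs_of_nonneg hc] at h2
    linarith
  have hint_z : ∀ t m, Integrable (z t m) P := by
    intro t m
    refine hintb _ σ (hzmeas t m) ?_
    filter_upwards [hzae] with ω h
    rcases h (t, m) with h' | h' <;> rw [h'] <;>
      simp [abs_of_pos hσ, abs_of_neg, neg_neg, hσ.le]
  have hmaxabs : ∀ a : ℝ, |max a 0| ≤ |a| := by
    intro a
    rw [abs_of_nonneg (le_max_right a 0)]
    exact max_le (le_abs_self a) (abs_nonneg a)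
  have hint_max : ∀ t m, Integrable (fun ω => max (u t m ω - c) 0) P := by
    intro t m
    refine hintb _ (B t) (((humeas t m).sub measurable_const).max measurable_const) ?_
    filter_upwards [hubd] with ω h
    exact le_trans (hmaxabs _) (h t m)
  -- the indicator of z = -σ
  set ind : ℝ → ℝ := fun w => Set.indicator {(-σ)} (fun _ => (1:ℝ)) w with hind_def
  have hindmeas : Measurable ind := measurable_const.indicator (measurableSet_singleton _)
  have hind_sigma : ind σ = 0 := by
    have hne : σ ∉ ({-σ} : Set ℝ) := by
      simp only [Set.mem_singleton_iff]
      intro h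
      nlinarith
    exact Set.indicator_of_notMem hne _
  have hind_neg : ind (-σ) = 1 := by simp [hind_def]
  have hind_bd : ∀ w, |ind w| ≤ 1 := by
    intro w
    simp only [hind_def, Set.indicator]
    split <;> simp
  have hind_int : ∀ t m, ∫ ω, ind (z t m ω) ∂P = 1/2 := by
    intro t m
    rw [twoPoint_comp_integral (hzmeas t m) (hzlaw t m) ind hindmeas, hind_sigma, hind_neg]
    norm_num
  have hEz0 : ∀ t m, ∫ ω, z t m ω ∂P = 0 := by
    intro t m
    have := twoPoint_comp_integral (hzmeas t m) (hzlaw t m) id measurable_id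
    simpa using this
  -- the mean quantities
  set Ai : ℕ → Fin M → ℝ := fun t m => ∫ ω, u t m ω ∂P with hAi_def
  set Qi : ℕ → Fin M → ℝ := fun t m => ∫ ω, max (u t m ω - c) 0 ∂P with hQi_def
  set Gi : ℕ → Fin M → ℝ := fun t m => ∫ ω, g (u t m ω) ∂P with hGi_def
  set bb : ℕ → ℝ := fun t => c - (M:ℝ)⁻¹ * ∑ m, Ai t m with hbb_def
  set q : ℕ → ℝ := fun t => (M:ℝ)⁻¹ * ∑ m, Qi t m with hq_def
  have hGi_eq : ∀ t m, Gi t m = c - ((1 - η*L) * (c - Ai t m) + (η*L) * Qi t m) := by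
    intro t m
    have hint1 : Integrable (fun ω => (1 - η*L) * (c - u t m ω)) P := by
      have h := ((integrable_const c).sub (hint_u t m)).const_mul (1 - η*L)
      exact h
    have hint2 : Integrable (fun ω => (η*L) * max (u t m ω - c) 0) P := by
      have h := (hint_max t m).const_mul (η*L)
      exact h
    have hint3 : Integrable (fun ω =>
        (1 - η*L) * (c - u t m ω) + (η*L) * max (u t m ω - c) 0) P := hint1.add hint2
    have hpt : (fun ω => g (u t m ω)) = fun ω =>
        c - ((1 - η*L)*(c - u t m ω) + (η*L) * max (u t m ω - c) 0) := by
      funext ω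
      simp only [hg_def]
      ring
    have e1 : Gi t m = ∫ ω, (c - ((1 - η*L)*(c - u t m ω)
        + (η*L) * max (u t m ω - c) 0)) ∂P := by
      show (∫ ω, g (u t m ω) ∂P) = _
      rw [hpt]
    have e2 : ∫ ω, (c - ((1 - η*L)*(c - u t m ω) + (η*L) * max (u t m ω - c) 0)) ∂P
        = c - ∫ ω, ((1 - η*L)*(c - u t m ω) + (η*L) * max (u t m ω - c) 0) ∂P := by
      rw [integral_sub (integrable_const c) hint3, integral_const]
      simp [measure_univ]
    have e3 : ∫ ω, ((1 - η*L)*(c - u t m ω) + (η*L) * max (u t m ω - c) 0) ∂P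
        = (1 - η*L) * ∫ ω, (c - u t m ω) ∂P + (η*L) * Qi t m := by
      rw [integral_add hint1 hint2, integral_const_mul, integral_const_mul]
    have e4 : ∫ ω, (c - u t m ω) ∂P = c - Ai t m := by
      rw [integral_sub (integrable_const c) (hint_u t m), integral_const]
      simp [measure_univ]
      rfl
    rw [e1, e2, e3, e4]
  have hA_next : ∀ t, (M:ℝ)⁻¹ * ∑ m, Ai (t+1) m = (M:ℝ)⁻¹ * ∑ m, Gi t m := by
    intro t
    have havg : ∀ ω, (∑ m, u (t+1) m ω) = ∑ m' : Fin M, (g (u t m' ω) - η * z t m' ω) := by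
      intro ω
      by_cases hco : (t+1) % K = 0
      · have hval : ∀ m : Fin M, u (t+1) m ω
            = (M:ℝ)⁻¹ * ∑ m' : Fin M, (g (u t m' ω) - η * z t m' ω) := fun m => by
          rw [hurec, if_pos hco]
        rw [Finset.sum_congr rfl (fun m _ => hval m), Finset.sum_const, Finset.card_univ,
          Fintype.card_fin, nsmul_eq_mul]
        field_simp
      · exact Finset.sum_congr rfl (fun m _ => by rw [hurec, if_neg hco])
    have hstep : ∑ m, Ai (t+1) m = ∑ m, Gi t m := by
      calc ∑ m, Ai (t+1) m = ∫ ω, ∑ m, u (t+1) m ω ∂P :=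
            (integral_finset_sum _ (fun m _ => hint_u (t+1) m)).symm
        _ = ∫ ω, ∑ m' : Fin M, (g (u t m' ω) - η * z t m' ω) ∂P := by
            congr 1
            exact funext havg
        _ = ∑ m' : Fin M, ∫ ω, (g (u t m' ω) - η * z t m' ω) ∂P :=
            integral_finset_sum _ (fun m _ => (hint_gu t m).sub ((hint_z t m).const_mul η))
        _ = ∑ m' : Fin M, (Gi t m' - η * ∫ ω, z t m' ω ∂P) := by
            refine Finset.sum_congr rfl (fun m' _ => ?_)
            rw [integral_sub (hint_gu t m') ((hint_z t m').const_mul η), integral_const_mul]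
        _ = ∑ m, Gi t m := by
            refine Finset.sum_congr rfl (fun m' _ => ?_)
            rw [hEz0]
            ring
    rw [hstep]
  have hbbrec : ∀ t, bb (t+1) = (1 - η*L) * bb t + (η*L) * q t := by
    intro t
    show c - (M:ℝ)⁻¹ * ∑ m, Ai (t+1) m = _
    rw [hA_next t]
    have hsubst : ∑ m, Gi t m
        = ∑ m : Fin M, (c - ((1 - η*L) * (c - Ai t m) + (η*L) * Qi t m)) :=
      Finset.sum_congr rfl (fun m _ => by rw [hGi_eq])
    rw [hsubst]
    have h6 : ∑ _m : Fin M, c = (M:ℝ)*c := by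
      rw [Finset.sum_const, Finset.card_univ, Fintype.card_fin, nsmul_eq_mul]
    have h7 : ∑ m : Fin M, (c - Ai t m) = (M:ℝ)*c - ∑ m, Ai t m := by
      rw [Finset.sum_sub_distrib, h6]
    have hexpand : ∑ m : Fin M, (c - ((1 - η*L) * (c - Ai t m) + (η*L) * Qi t m))
        = M*c - ((1 - η*L) * (M*c - ∑ m, Ai t m) + (η*L) * ∑ m, Qi t m) := by
      calc ∑ m : Fin M, (c - ((1 - η*L) * (c - Ai t m) + (η*L) * Qi t m))
          = (∑ _m : Fin M, c)
            - ∑ m : Fin M, ((1 - η*L) * (c - Ai t m) + (η*L) * Qi t m) :=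
            Finset.sum_sub_distrib _ _
        _ = (M:ℝ)*c - ((∑ m : Fin M, (1 - η*L) * (c - Ai t m))
            + ∑ m : Fin M, (η*L) * Qi t m) := by
            rw [h6, Finset.sum_add_distrib]
        _ = (M:ℝ)*c - ((1 - η*L) * (∑ m : Fin M, (c - Ai t m))
            + (η*L) * ∑ m, Qi t m) := by
            rw [← Finset.mul_sum, ← Finset.mul_sum]
        _ = M*c - ((1 - η*L) * (M*c - ∑ m, Ai t m) + (η*L) * ∑ m, Qi t m) := by
            rw [h7]
    rw [hexpand]
    show _ = (1 - η*L) * (c - (M:ℝ)⁻¹ * ∑ m, Ai t m) + (η*L) * ((M:ℝ)⁻¹ * ∑ m, Qi t m)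
    field_simp
    ring
  have hbb0 : bb 0 = c := by
    have hAi0 : ∀ m, Ai 0 m = 0 := by
      intro m
      show (∫ ω, u 0 m ω ∂P) = 0
      simp [hu0]
    show c - (M:ℝ)⁻¹ * ∑ m, Ai 0 m = c
    simp [hAi0]
  have hq0 : ∀ t, 0 ≤ q t := by
    intro t
    apply mul_nonneg (inv_nonneg.mpr hMR.le)
    apply Finset.sum_nonneg
    intro m _
    exact integral_nonneg (fun ω => le_max_right _ _)
  have hqlb : ∀ t, t % K ≠ 0 → (η*σ - bb t)/2 ≤ q t := by
    intro t ht
    obtain ⟨t', rfl⟩ : ∃ t', t = t'+1 := by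
      refine ⟨t-1, ?_⟩
      have : t ≠ 0 := by
        intro h0
        exact ht (by rw [h0]; exact Nat.zero_mod K)
      omega
    have hper : ∀ m, (Gi t' m + η*σ - c)/2 ≤ Qi (t'+1) m := by
      intro m
      have hueq : ∀ ω, u (t'+1) m ω = g (u t' m ω) - η * z t' m ω := fun ω => by
        rw [hurec, if_neg ht]
      have hpw : ∀ ω, (g (u t' m ω) - c + η*σ) * ind (z t' m ω)
          ≤ max (u (t'+1) m ω - c) 0 := by
        intro ω
        rw [hueq ω]
        by_cases hzz : z t' m ω = -σ
        · rw [hzz, hind_neg, mul_one]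
          have heq2 : g (u t' m ω) - η * (-σ) - c = g (u t' m ω) - c + η*σ := by ring
          rw [heq2]
          exact le_max_left _ _
        · have hzero : ind (z t' m ω) = 0 :=
            Set.indicator_of_notMem (by simpa using hzz) _
          rw [hzero, mul_zero]
          exact le_max_right _ _
      have hlhs_meas : Measurable (fun ω => (g (u t' m ω) - c + η*σ) * ind (z t' m ω)) :=
        (((hgmeas.comp (humeas t' m)).sub measurable_const).add measurable_const).mul
          (hindmeas.comp (hzmeas t' m))
      have hlhs_int : Integrable (fun ω => (g (u t' m ω) - c + η*σ) * ind (z t' m ω)) P := by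
        refine hintb _ (B t' + η*σ) hlhs_meas ?_
        filter_upwards [hubd] with ω h
        have h1 : |g (u t' m ω) - c| ≤ B t' := le_trans (hcontract _) (h t' m)
        have h2 : |g (u t' m ω) - c + η*σ| ≤ B t' + η*σ := by
          have := abs_add_le (g (u t' m ω) - c) (η*σ)
          have h3 : |η*σ| = η*σ := abs_of_pos (mul_pos hη hσ)
          rw [h3] at this
          linarith
        calc |(g (u t' m ω) - c + η*σ) * ind (z t' m ω)|
            = |g (u t' m ω) - c + η*σ| * |ind (z t' m ω)| := abs_mul _ _
          _ ≤ (B t' + η*σ) * 1 := by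
              apply mul_le_mul h2 (hind_bd _) (abs_nonneg _)
              have : 0 ≤ |g (u t' m ω) - c + η*σ| := abs_nonneg _
              linarith [le_trans (abs_nonneg _) h2]
          _ = B t' + η*σ := mul_one _
      have hmono := integral_mono hlhs_int (hint_max (t'+1) m) hpw
      -- compute the left integral
      have hsplit : (fun ω => (g (u t' m ω) - c + η*σ) * ind (z t' m ω))
          = fun ω => g (u t' m ω) * ind (z t' m ω) + (η*σ - c) * ind (z t' m ω) := by
        funext ω
        ring
      have hI : IndepFun (fun ω => g (u t' m ω)) (fun ω => ind (z t' m ω)) P :=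
        (hIndep t' m).comp hgmeas hindmeas
      have hprod : ∫ ω, g (u t' m ω) * ind (z t' m ω) ∂P = Gi t' m * (1/2) := by
        have h := hI.integral_mul_eq_mul_integral (hgmeas.comp (humeas t' m)).aestronglyMeasurable
          ((hindmeas.comp (hzmeas t' m)).aestronglyMeasurable)
        have h2 : (fun ω => g (u t' m ω) * ind (z t' m ω))
            = ((fun ω => g (u t' m ω)) * (fun ω => ind (z t' m ω))) := rfl
        show (∫ ω, g (u t' m ω) * ind (z t' m ω) ∂P) = _
        rw [h2, h, hind_int]
      have hind_int2 : Integrable (fun ω => ind (z t' m ω)) P :=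
        hintb _ 1 (hindmeas.comp (hzmeas t' m))
          (Filter.Eventually.of_forall (fun ω => hind_bd _))
      have hgi_int : Integrable (fun ω => g (u t' m ω) * ind (z t' m ω)) P := by
        refine hintb _ (B t' + c) ((hgmeas.comp (humeas t' m)).mul
          (hindmeas.comp (hzmeas t' m))) ?_
        filter_upwards [hubd] with ω h
        have h1 : |g (u t' m ω) - c| ≤ B t' := le_trans (hcontract _) (h t' m)
        have h2 : |g (u t' m ω)| ≤ B t' + c := by
          have := abs_add_le (g (u t' m ω) - c) c
          rw [abs_of_nonneg hc] at this
          have h4 : g (u t' m ω) - c + c = g (u t' m ω) := by ring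
          rw [h4] at this
          linarith
        calc |g (u t' m ω) * ind (z t' m ω)|
            = |g (u t' m ω)| * |ind (z t' m ω)| := abs_mul _ _
          _ ≤ (B t' + c) * 1 := mul_le_mul h2 (hind_bd _) (abs_nonneg _)
              (le_trans (abs_nonneg _) h2)
          _ = B t' + c := mul_one _
      have hlhs_val : ∫ ω, (g (u t' m ω) - c + η*σ) * ind (z t' m ω) ∂P
          = Gi t' m * (1/2) + (η*σ - c) * (1/2) := by
        rw [hsplit, integral_add hgi_int (hind_int2.const_mul _), hprod,
          integral_const_mul, hind_int]
      rw [hlhs_val] at hmono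
      have : (∫ ω, max (u (t'+1) m ω - c) 0 ∂P) = Qi (t'+1) m := rfl
      rw [this] at hmono
      linarith
    have h1 : (M:ℝ)⁻¹ * ∑ m : Fin M, ((Gi t' m + η*σ - c)/2) ≤ q (t'+1) := by
      show _ ≤ (M:ℝ)⁻¹ * ∑ m, Qi (t'+1) m
      apply mul_le_mul_of_nonneg_left (Finset.sum_le_sum (fun m _ => hper m))
        (inv_nonneg.mpr hMR.le)
    have h2 : ∑ m : Fin M, ((Gi t' m + η*σ - c)/2)
        = (∑ m, Gi t' m)/2 + M*((η*σ - c)/2) := by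
      calc ∑ m : Fin M, ((Gi t' m + η*σ - c)/2)
          = ∑ m : Fin M, (Gi t' m/2 + (η*σ - c)/2) :=
            Finset.sum_congr rfl (fun m _ => by ring)
        _ = (∑ m : Fin M, Gi t' m/2) + ∑ _m : Fin M, ((η*σ - c)/2) :=
            Finset.sum_add_distrib
        _ = (∑ m, Gi t' m)/2 + M*((η*σ - c)/2) := by
            rw [← Finset.sum_div, Finset.sum_const, Finset.card_univ, Fintype.card_fin,
              nsmul_eq_mul]
    have h3 : bb (t'+1) = c - (M:ℝ)⁻¹ * ∑ m, Gi t' m := by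
      show c - (M:ℝ)⁻¹ * ∑ m, Ai (t'+1) m = _
      rw [hA_next t']
    have h4 : (M:ℝ)⁻¹ * ∑ m : Fin M, ((Gi t' m + η*σ - c)/2)
        = ((M:ℝ)⁻¹ * ∑ m, Gi t' m + η*σ - c)/2 := by
      rw [h2]
      field_simp
      ring
    rw [h4] at h1
    rw [h3]
    linarith
  -- apply the deterministic recursion lemma
  have hcase' : η*σ/48 ≤ c ∨ 2 ≤ (η*L) * ((R:ℝ) * (K:ℝ)) := by
    rcases hcase with h | h
    · left
      linarith
    · right
      have hRpos : (0:ℝ) < R := by exact_mod_cast hR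
      have hKpos : (0:ℝ) < K := by positivity
      have hpos : (0:ℝ) < L * R * K := by positivity
      have h2' := (div_le_iff₀ hpos).mp h
      calc (2:ℝ) ≤ η * (L * R * K) := by linarith
        _ = (η*L) * ((R:ℝ) * (K:ℝ)) := by ring
  have hdet := det_rec (η*L) (η*σ) c K R hβ0 hβhalf (mul_pos hη hσ) hc hK hR bb q
    hbb0 hbbrec hq0 hqlb hcase'
  -- final step: Jensen and assembling the goal
  set T := K*R with hT_def
  set X : Ω → ℝ := fun ω => (M:ℝ)⁻¹ * ∑ m, u T m ω - c with hX_def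
  have hXmeas : Measurable X :=
    ((Finset.measurable_sum _ (fun m _ => humeas T m)).const_mul _).sub measurable_const
  have hXbd : ∀ᵐ ω ∂P, |X ω| ≤ B T := by
    filter_upwards [hubd] with ω h
    have heq : X ω = (M:ℝ)⁻¹ * ∑ m : Fin M, (u T m ω - c) := by
      show (M:ℝ)⁻¹ * ∑ m, u T m ω - c = _
      rw [Finset.sum_sub_distrib, Finset.sum_const, Finset.card_univ, Fintype.card_fin,
        nsmul_eq_mul]
      field_simp
    rw [heq, abs_mul, abs_inv, Nat.abs_cast]
    have hs1 : |∑ m : Fin M, (u T m ω - c)| ≤ ∑ m : Fin M, |u T m ω - c| :=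
      Finset.abs_sum_le_sum_abs _ _
    have hs2 : ∑ m : Fin M, |u T m ω - c| ≤ M * B T := by
      calc ∑ m : Fin M, |u T m ω - c| ≤ ∑ _m : Fin M, B T :=
            Finset.sum_le_sum (fun m _ => h T m)
        _ = M * B T := by
            rw [Finset.sum_const, Finset.card_univ, Fintype.card_fin, nsmul_eq_mul]
    have hBnn : 0 ≤ B T := le_trans (abs_nonneg _) (h T ⟨0, by omega⟩)
    calc (M:ℝ)⁻¹ * |∑ m : Fin M, (u T m ω - c)|
        ≤ (M:ℝ)⁻¹ * (M * B T) := by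
          apply mul_le_mul_of_nonneg_left (le_trans hs1 hs2) (inv_nonneg.mpr hMR.le)
      _ = B T := by field_simp
  have hXint : Integrable X P := hintb _ (B T) hXmeas hXbd
  have hX2int : Integrable (fun ω => X ω^2) P := by
    refine hintb _ ((B T)^2) (hXmeas.pow_const 2) ?_
    filter_upwards [hXbd] with ω h
    rw [abs_pow]
    exact pow_le_pow_left₀ (abs_nonneg _) h 2
  have hmax2int : Integrable (fun ω => max (X ω) 0 ^ 2) P := by
    refine hintb _ ((B T)^2) ((hXmeas.max measurable_const).pow_const 2) ?_
    filter_upwards [hXbd] with ω h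
    rw [abs_pow]
    exact pow_le_pow_left₀ (abs_nonneg _) (le_trans (hmaxabs (X ω)) h) 2
  have hEX : ∫ ω, X ω ∂P = (M:ℝ)⁻¹ * ∑ m, Ai T m - c := by
    show (∫ ω, ((M:ℝ)⁻¹ * ∑ m, u T m ω - c) ∂P) = _
    rw [integral_sub ((integrable_finset_sum _ (fun m _ => hint_u T m)).const_mul _)
        (integrable_const c),
      integral_const_mul, integral_finset_sum _ (fun m _ => hint_u T m), integral_const]
    simp [measure_univ]
    exact Or.inl rfl
  have hEXle : ∫ ω, X ω ∂P ≤ -(η*σ/48) := by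
    rw [hEX]
    have heq3 : (M:ℝ)⁻¹ * ∑ m, Ai T m - c = -(bb T) := by
      show _ = -(c - (M:ℝ)⁻¹ * ∑ m, Ai T m)
      ring
    rw [heq3]
    linarith [hdet]
  have hvar : (∫ ω, X ω ∂P)^2 ≤ ∫ ω, X ω^2 ∂P := by
    set μX := ∫ ω, X ω ∂P with hmu
    have hnn : 0 ≤ ∫ ω, (X ω - μX)^2 ∂P := integral_nonneg (fun ω => sq_nonneg _)
    have hexp : ∫ ω, (X ω - μX)^2 ∂P = ∫ ω, X ω^2 ∂P - μX^2 := by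
      have hint4 : Integrable (fun ω => (2*μX) * X ω) P := hXint.const_mul _
      have hint5 : Integrable (fun ω => X ω^2 - (2*μX) * X ω) P := hX2int.sub hint4
      have hfn : (fun ω => (X ω - μX)^2) = fun ω => (X ω^2 - (2*μX) * X ω) + μX^2 :=
        funext (fun ω => by ring)
      rw [hfn, integral_add hint5 (integrable_const _), integral_sub hX2int hint4,
        integral_const_mul, integral_const]
      simp [measure_univ]
      ring
    nlinarith [hnn, hexp]
  have hm2 : (η*σ/48)^2 ≤ (∫ ω, X ω ∂P)^2 := by
    nlinarith [mul_pos hη hσ, hEXle]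
  have hgoal_eq : (∫ ω, L / 2 * ((((M:ℝ)⁻¹ • ∑ m : Fin M, x T m ω) 2 - c) ^ 2 +
        max (((M:ℝ)⁻¹ • ∑ m : Fin M, x T m ω) 2 - c) 0 ^ 2) ∂P)
      = L/2 * ((∫ ω, X ω^2 ∂P) + (∫ ω, max (X ω) 0^2 ∂P)) := by
    have hptX : ∀ ω : Ω, ((M:ℝ)⁻¹ • ∑ m : Fin M, x T m ω) 2 - c = X ω := by
      intro ω
      rw [Pi.smul_apply, Finset.sum_apply, smul_eq_mul]
    have hfun : (fun ω => L / 2 * ((((M:ℝ)⁻¹ • ∑ m : Fin M, x T m ω) 2 - c) ^ 2 +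
            max (((M:ℝ)⁻¹ • ∑ m : Fin M, x T m ω) 2 - c) 0 ^ 2))
        = fun ω => L/2 * (X ω^2 + max (X ω) 0^2) := by
      funext ω
      rw [hptX ω]
    calc (∫ ω, L / 2 * ((((M:ℝ)⁻¹ • ∑ m : Fin M, x T m ω) 2 - c) ^ 2 +
            max (((M:ℝ)⁻¹ • ∑ m : Fin M, x T m ω) 2 - c) 0 ^ 2) ∂P)
        = ∫ ω, L/2 * (X ω^2 + max (X ω) 0^2) ∂P := by
          rw [hfun]
      _ = L/2 * ∫ ω, (X ω^2 + max (X ω) 0^2) ∂P := integral_const_mul _ _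
      _ = L/2 * ((∫ ω, X ω^2 ∂P) + (∫ ω, max (X ω) 0^2 ∂P)) := by
          rw [integral_add hX2int hmax2int]
  have hmaxnn : 0 ≤ ∫ ω, max (X ω) 0 ^2 ∂P := integral_nonneg (fun ω => sq_nonneg _)
  calc L * η^2 * σ^2 / 4608 = L/2 * ((η*σ/48)^2 + 0) := by ring
    _ ≤ L/2 * ((∫ ω, X ω^2 ∂P) + (∫ ω, max (X ω) 0^2 ∂P)) := by
        apply mul_le_mul_of_nonneg_left _ (by positivity)
        have h5 := le_trans hm2 hvar
        linarith
    _ = _ := hgoal_eq.symm
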